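/- Let w ∈ L¹(ℝ³) and u, v ∈ L²(ℝ³), and define f(x,y) := u(x) w(x−y) v(y). Then f ∈ L¹(ℝ³ × ℝ³), and for all p, q ∈ ℝ³ its Fourier transform satisfies f̂(p,q) = ∫_{ℝ³} w(z) ĝ_z(p+q) e^{−2πi p·z} dz, where g_z(y) := u(y+z) v(y) belongs to L¹(ℝ³) for every z, and the Fourier transform of an integrable function h is ĥ(ξ) = ∫ h(x) e^{−2πi x·ξ} dx. -/

import Mathlib

open MeasureTheory

noncomputable section

local notation "E" => EuclideanSpace ℝ (Fin 3)

/-- The Fourier transform on `ℝ³`, with the convention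
`ĥ ξ = ∫ h x * exp (-2πi ⟪x, ξ⟫) dx`. -/
def fourier3 (h : E → ℂ) (ξ : E) : ℂ :=
  ∫ x : E, h x * Complex.exp (-(2 * (Real.pi : ℂ) * Complex.I * ((inner ℝ x ξ : ℝ) : ℂ)))

/-- The Fourier transform on `ℝ³ × ℝ³`, with the convention
`f̂ (p, q) = ∬ f x y * exp (-2πi (⟪x, p⟫ + ⟪y, q⟫)) dx dy`. -/
def fourier6 (f : E → E → ℂ) (p q : E) : ℂ :=
  ∫ x : E, ∫ y : E,
    f x y * Complex.exp (-(2 * (Real.pi : ℂ) * Complex.I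
      * (((inner ℝ x p : ℝ) + (inner ℝ y q : ℝ) : ℝ) : ℂ)))

namespace FourierFactorAux

lemma norm_exp_aux (r : ℝ) :
    ‖Complex.exp (-(2 * (Real.pi : ℂ) * Complex.I * (r : ℂ)))‖ = 1 := by
  have h : -(2 * (Real.pi : ℂ) * Complex.I * (r : ℂ))
      = ((-(2 * Real.pi * r) : ℝ) : ℂ) * Complex.I := by push_cast; ring
  rw [h, Complex.norm_exp_ofReal_mul_I]

lemma h12 : (1 : ENNReal) / 1 = 1 / 2 + 1 / 2 := by
  rw [ENNReal.add_halves, one_div_one]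

/-- The shear `(x, y) ↦ (x + y, y)` as a measurable equivalence. -/
def shearT : (E × E) ≃ᵐ (E × E) where
  toFun := fun z => (z.1 + z.2, z.2)
  invFun := fun z => (z.1 - z.2, z.2)
  left_inv := fun z => by simp
  right_inv := fun z => by simp
  measurable_toFun := (measurable_fst.add measurable_snd).prodMk measurable_snd
  measurable_invFun := (measurable_fst.sub measurable_snd).prodMk measurable_snd

/-- The main theorem under additional measurability assumptions. -/
theorem key
    (w u v : E → ℂ)
    (hwm : Measurable w) (hum : Measurable u) (hvm : Measurable v)
    (hw : MemLp w 1 volume)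
    (hu : MemLp u 2 volume)
    (hv : MemLp v 2 volume) :
    Integrable (fun z : E × E => u z.1 * w (z.1 - z.2) * v z.2) volume
    ∧ (∀ z : E, Integrable (fun y : E => u (y + z) * v y) volume)
    ∧ (∀ p q : E,
        fourier6 (fun x y => u x * w (x - y) * v y) p q
          = ∫ z : E, w z * fourier3 (fun y => u (y + z) * v y) (p + q)
              * Complex.exp (-(2 * (Real.pi : ℂ) * Complex.I * ((inner ℝ p z : ℝ) : ℂ)))) := by
  have huz : ∀ z : E, MemLp (fun y : E => u (y + z)) 2 volume := fun z =>
    hu.comp_measurePreserving (measurePreserving_add_right volume z)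
  have huznorm : ∀ z : E,
      eLpNorm (fun y : E => u (y + z)) 2 volume = eLpNorm u 2 volume := fun z =>
    eLpNorm_comp_measurePreserving hu.1 (measurePreserving_add_right volume z)
  -- Part 2 : integrability of `g_z`
  have hg : ∀ z : E, Integrable (fun y : E => u (y + z) * v y) volume := fun z =>
    memLp_one_iff_integrable.mp (hv.smul (huz z) (r := 1) (hpqr := ⟨by simpa [one_div] using h12.symm⟩))
  -- Hölder bound for `g_z`, uniform in `z`
  have hgnorm : ∀ z : E, eLpNorm (fun y : E => u (y + z) * v y) 1 volume
      ≤ eLpNorm u 2 volume * eLpNorm v 2 volume := by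
    intro z
    have h := eLpNorm_smul_le_mul_eLpNorm (μ := volume) (f := v)
      (φ := fun y : E => u (y + z)) hv.1 (huz z).1 (p := 2) (q := 2) (r := 1)
      (hpqr := ⟨by simpa [one_div] using h12.symm⟩)
    rw [huznorm z] at h
    exact h
  -- the sheared kernel
  set F : E × E → ℂ := fun zy => w zy.1 * (u (zy.2 + zy.1) * v zy.2) with hFdef
  have hFm : Measurable F :=
    (hwm.comp measurable_fst).mul
      ((hum.comp (measurable_snd.add measurable_fst)).mul (hvm.comp measurable_snd))
  have hFi : Integrable F ((volume : Measure E).prod volume) := by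
    refine ⟨hFm.aestronglyMeasurable, ?_⟩
    rw [hasFiniteIntegral_def]
    have hmeas : Measurable fun zy : E × E => ‖F zy‖ₑ := hFm.enorm
    rw [lintegral_prod _ hmeas.aemeasurable]
    have hb : ∀ z : E, (∫⁻ y : E, ‖F (z, y)‖ₑ ∂volume)
        ≤ ‖w z‖ₑ * (eLpNorm u 2 volume * eLpNorm v 2 volume) := by
      intro z
      have hpt : ∀ y : E, ‖F (z, y)‖ₑ
          = ‖w z‖ₑ * ‖u (y + z) * v y‖ₑ := by
        intro y
        simp only [hFdef, enorm_mul]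
      have hmz : Measurable fun y : E => ‖u (y + z) * v y‖ₑ :=
        ((hum.comp (measurable_add_const z)).mul hvm).enorm
      rw [lintegral_congr hpt, lintegral_const_mul _ hmz]
      refine mul_le_mul_right ?_ _
      rw [← eLpNorm_one_eq_lintegral_enorm]
      exact hgnorm z
    refine lt_of_le_of_lt (lintegral_mono hb) ?_
    rw [lintegral_mul_const _ hwm.enorm, ← eLpNorm_one_eq_lintegral_enorm]
    exact ENNReal.mul_lt_top hw.eLpNorm_lt_top
      (ENNReal.mul_lt_top hu.eLpNorm_lt_top hv.eLpNorm_lt_top)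
  -- the shear is measure preserving
  have hT : MeasurePreserving (fun z : E × E => (z.1 + z.2, z.2))
      ((volume : Measure E).prod volume) ((volume : Measure E).prod volume) :=
    measurePreserving_add_prod volume volume
  have hfm : Measurable (fun z : E × E => u z.1 * w (z.1 - z.2) * v z.2) :=
    ((hum.comp measurable_fst).mul (hwm.comp (measurable_fst.sub measurable_snd))).mul
      (hvm.comp measurable_snd)
  have hcomp : ((fun z : E × E => u z.1 * w (z.1 - z.2) * v z.2)
      ∘ (fun z : E × E => (z.1 + z.2, z.2))) = F := by
    funext zy
    simp only [Function.comp_apply, hFdef, add_sub_cancel_right]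
    rw [add_comm zy.1 zy.2]; ring
  have h1 : Integrable (fun z : E × E => u z.1 * w (z.1 - z.2) * v z.2)
      ((volume : Measure E).prod volume) := by
    refine (hT.integrable_comp hfm.aestronglyMeasurable).mp ?_
    rw [hcomp]; exact hFi
  refine ⟨h1, hg, ?_⟩
  intro p q
  set G : E × E → ℂ := fun xy =>
    u xy.1 * w (xy.1 - xy.2) * v xy.2
      * Complex.exp (-(2 * (Real.pi : ℂ) * Complex.I
          * (((inner ℝ xy.1 p : ℝ) + (inner ℝ xy.2 q : ℝ) : ℝ) : ℂ))) with hGdef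
  have hexpm : Measurable fun xy : E × E =>
      Complex.exp (-(2 * (Real.pi : ℂ) * Complex.I
        * (((inner ℝ xy.1 p : ℝ) + (inner ℝ xy.2 q : ℝ) : ℝ) : ℂ))) := by
    have hinner : Continuous fun xy : E × E =>
        ((inner ℝ xy.1 p : ℝ) + (inner ℝ xy.2 q : ℝ) : ℝ) :=
      (continuous_fst.inner continuous_const).add (continuous_snd.inner continuous_const)
    exact (Complex.continuous_exp.comp
      ((continuous_const.mul (Complex.continuous_ofReal.comp hinner)).neg)).measurable
  have hGm : Measurable G := hfm.mul hexpm
  have hGi : Integrable G ((volume : Measure E).prod volume) := by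
    have h := Integrable.bdd_mul (c := 1) h1 hexpm.aestronglyMeasurable
      (Filter.Eventually.of_forall fun xy => le_of_eq (norm_exp_aux _))
    exact h.congr (Filter.Eventually.of_forall fun xy => mul_comm _ _)
  have hGT : Integrable (G ∘ fun z : E × E => (z.1 + z.2, z.2))
      ((volume : Measure E).prod volume) :=
    (hT.integrable_comp hGm.aestronglyMeasurable).mpr hGi
  have hstep1 : fourier6 (fun x y => u x * w (x - y) * v y) p q
      = ∫ x : E, ∫ y : E, G (x, y) := rfl
  have hiter1 : (∫ x : E, ∫ y : E, G (x, y))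
      = ∫ z : E × E, G z ∂((volume : Measure E).prod volume) :=
    integral_integral (f := fun x y => G (x, y)) hGi
  have hshear : (∫ z : E × E, G z ∂((volume : Measure E).prod volume))
      = ∫ zy : E × E, G (zy.1 + zy.2, zy.2) ∂((volume : Measure E).prod volume) :=
    (hT.integral_comp shearT.measurableEmbedding G).symm
  have hiter2 : (∫ zy : E × E, G (zy.1 + zy.2, zy.2) ∂((volume : Measure E).prod volume))
      = ∫ z : E, ∫ y : E, G (z + y, y) :=
    (integral_integral (f := fun z y => G (z + y, y)) hGT).symm
  rw [hstep1, hiter1, hshear, hiter2]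
  refine integral_congr_ae (Filter.Eventually.of_forall fun z => ?_)
  have hz : ∀ y : E, G (z + y, y)
      = (w z * Complex.exp (-(2 * (Real.pi : ℂ) * Complex.I * ((inner ℝ p z : ℝ) : ℂ))))
        * (u (y + z) * v y * Complex.exp (-(2 * (Real.pi : ℂ) * Complex.I
            * ((inner ℝ y (p + q) : ℝ) : ℂ)))) := by
    intro y
    have hi : ((inner ℝ (z + y) p : ℝ) + (inner ℝ y q : ℝ) : ℝ)
        = ((inner ℝ p z : ℝ) + (inner ℝ y (p + q) : ℝ) : ℝ) := by
      simp only [inner_add_left, inner_add_right]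
      rw [real_inner_comm p z]; ring
    simp only [hGdef, add_sub_cancel_right]
    rw [hi, add_comm z y,
      show -(2 * (Real.pi : ℂ) * Complex.I
            * (((inner ℝ p z : ℝ) + (inner ℝ y (p + q) : ℝ) : ℝ) : ℂ))
          = -(2 * (Real.pi : ℂ) * Complex.I * ((inner ℝ p z : ℝ) : ℂ))
            + -(2 * (Real.pi : ℂ) * Complex.I * ((inner ℝ y (p + q) : ℝ) : ℂ)) from by
        push_cast; ring,
      Complex.exp_add]
    ring
  calc (∫ y : E, G (z + y, y))
      = ∫ y : E, (w z * Complex.exp (-(2 * (Real.pi : ℂ) * Complex.I * ((inner ℝ p z : ℝ) : ℂ))))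
          * (u (y + z) * v y * Complex.exp (-(2 * (Real.pi : ℂ) * Complex.I
              * ((inner ℝ y (p + q) : ℝ) : ℂ)))) := by
        simp only [hz]
    _ = (w z * Complex.exp (-(2 * (Real.pi : ℂ) * Complex.I * ((inner ℝ p z : ℝ) : ℂ))))
          * ∫ y : E, u (y + z) * v y * Complex.exp (-(2 * (Real.pi : ℂ) * Complex.I
              * ((inner ℝ y (p + q) : ℝ) : ℂ))) := integral_const_mul _ _
    _ = w z * fourier3 (fun y => u (y + z) * v y) (p + q)
          * Complex.exp (-(2 * (Real.pi : ℂ) * Complex.I * ((inner ℝ p z : ℝ) : ℂ))) := by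
        simp only [fourier3]; ring

end FourierFactorAux

/-- **Fourier factorization of the pairing kernel.** For `w ∈ L¹(ℝ³)` and
`u, v ∈ L²(ℝ³)`, the kernel `f (x,y) = u x * w (x-y) * v y` is integrable on
`ℝ³ × ℝ³`, `g_z (y) = u (y+z) * v y` is integrable for every `z`, and
`f̂ (p,q) = ∫ w z * ĝ_z (p+q) * exp (-2πi ⟪p, z⟫) dz`. -/
theorem fourier_factorization_pairing_kernel
    (w u v : E → ℂ)
    (hw : MemLp w 1 volume)
    (hu : MemLp u 2 volume)
    (hv : MemLp v 2 volume) :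
    Integrable (fun z : E × E => u z.1 * w (z.1 - z.2) * v z.2) volume
    ∧ (∀ z : E, Integrable (fun y : E => u (y + z) * v y) volume)
    ∧ (∀ p q : E,
        fourier6 (fun x y => u x * w (x - y) * v y) p q
          = ∫ z : E, w z * fourier3 (fun y => u (y + z) * v y) (p + q)
              * Complex.exp (-(2 * (Real.pi : ℂ) * Complex.I * ((inner ℝ p z : ℝ) : ℂ)))) := by
  set u' : E → ℂ := hu.1.mk u with hu'def
  set v' : E → ℂ := hv.1.mk v with hv'def
  set w' : E → ℂ := hw.1.mk w with hw'def
  have hueq : u =ᵐ[volume] u' := hu.1.ae_eq_mk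
  have hveq : v =ᵐ[volume] v' := hv.1.ae_eq_mk
  have hweq : w =ᵐ[volume] w' := hw.1.ae_eq_mk
  have hum : Measurable u' := hu.1.stronglyMeasurable_mk.measurable
  have hvm : Measurable v' := hv.1.stronglyMeasurable_mk.measurable
  have hwm : Measurable w' := hw.1.stronglyMeasurable_mk.measurable
  have hu' : MemLp u' 2 volume := hu.ae_eq hueq
  have hv' : MemLp v' 2 volume := hv.ae_eq hveq
  have hw' : MemLp w' 1 volume := hw.ae_eq hweq
  obtain ⟨H1, H2, H3⟩ := FourierFactorAux.key w' u' v' hwm hum hvm hw' hu' hv'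
  -- quasi-measure-preserving maps used for transfering a.e. equalities
  have q1 : Measure.QuasiMeasurePreserving (Prod.fst : E × E → E) volume volume :=
    Measure.quasiMeasurePreserving_fst
      (μ := (volume : Measure E)) (ν := (volume : Measure E))
  have q2 : Measure.QuasiMeasurePreserving (Prod.snd : E × E → E) volume volume :=
    Measure.quasiMeasurePreserving_snd
      (μ := (volume : Measure E)) (ν := (volume : Measure E))
  have qsub : Measure.QuasiMeasurePreserving (fun z : E × E => z.1 - z.2) volume volume := by
    have h := (measurePreserving_sub_prod (volume : Measure E) volume).quasiMeasurePreserving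
    exact q1.comp h
  have hprodeq : (fun z : E × E => u z.1 * w (z.1 - z.2) * v z.2)
      =ᵐ[volume] (fun z : E × E => u' z.1 * w' (z.1 - z.2) * v' z.2) := by
    filter_upwards [q1.ae_eq_comp hueq, qsub.ae_eq_comp hweq, q2.ae_eq_comp hveq]
      with z h1 h2 h3
    simp only [Function.comp_apply] at h1 h2 h3
    rw [h1, h2, h3]
  have hgz_eq : ∀ z : E, (fun y : E => u (y + z) * v y)
      =ᵐ[volume] (fun y : E => u' (y + z) * v' y) := by
    intro z
    have ha := ((measurePreserving_add_right (volume : Measure E) z).quasiMeasurePreserving).ae_eq_comp hueq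
    filter_upwards [ha, hveq] with y h1 h2
    simp only [Function.comp_apply] at h1
    rw [h1, h2]
  refine ⟨H1.congr hprodeq.symm, fun z => (H2 z).congr (hgz_eq z).symm, ?_⟩
  intro p q
  have hL : fourier6 (fun x y => u x * w (x - y) * v y) p q
      = fourier6 (fun x y => u' x * w' (x - y) * v' y) p q := by
    simp only [fourier6]
    refine integral_congr_ae ?_
    filter_upwards [hueq] with x hx
    refine integral_congr_ae ?_
    have hb := ((Measure.measurePreserving_sub_left (volume : Measure E) x).quasiMeasurePreserving).ae_eq_comp hweq
    filter_upwards [hb, hveq] with y h1 h2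
    simp only [Function.comp_apply] at h1
    rw [hx, h1, h2]
  have hf3 : ∀ z : E, fourier3 (fun y : E => u (y + z) * v y) (p + q)
      = fourier3 (fun y : E => u' (y + z) * v' y) (p + q) := by
    intro z
    simp only [fourier3]
    refine integral_congr_ae ?_
    filter_upwards [hgz_eq z] with y hy
    rw [hy]
  have hR : (∫ z : E, w z * fourier3 (fun y => u (y + z) * v y) (p + q)
        * Complex.exp (-(2 * (Real.pi : ℂ) * Complex.I * ((inner ℝ p z : ℝ) : ℂ))))
      = ∫ z : E, w' z * fourier3 (fun y => u' (y + z) * v' y) (p + q)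
        * Complex.exp (-(2 * (Real.pi : ℂ) * Complex.I * ((inner ℝ p z : ℝ) : ℂ))) := by
    refine integral_congr_ae ?_
    filter_upwards [hweq] with z hz
    rw [hz, hf3 z]
  rw [hL, hR]
  exact H3 p q
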